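/- arXiv:funct-an/9302004 — 3 statements merged into one kernel-verified Lean document; each statement's English description precedes it below -/
import Mathlib

section
/- Let f ∈ L¹(ℝⁿ) with f(x) ≥ 0 almost everywhere and ∫_{ℝⁿ} f(x) dx = 1, and let Q ⊂ ℝⁿ be a bounded measurable set of positive Lebesgue measure. Then r^{−n} ∫_{rQ} ∫_{rQ} f(x−y) dx dy → meas(Q) as r → ∞, where rQ = {rx : x ∈ Q}. -/
open MeasureTheory Filter Pointwise

open scoped ENNReal symmDiff Topology

section Aux

variable {n : ℕ}

local notation "E" => EuclideanSpace ℝ (Fin n)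

/-- Fubini-type identity for the double set lintegral of `φ (x - y)`. -/
lemma aux_fub (φ : E → ℝ≥0∞) (hφ : Measurable φ) (s : Set E) (hs : MeasurableSet s) :
    ∫⁻ x in s, ∫⁻ y in s, φ (x - y) =
      ∫⁻ z, φ z * volume ({y | z + y ∈ s} ∩ s) := by
  have hswap1 : ∫⁻ x in s, ∫⁻ y in s, φ (x - y) = ∫⁻ y in s, ∫⁻ x in s, φ (x - y) :=
    lintegral_lintegral_swap ((hφ.comp (measurable_fst.sub measurable_snd)).aemeasurable)
  have hinner : ∀ y : E, ∫⁻ x in s, φ (x - y)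
      = ∫⁻ x, φ x * s.indicator 1 (x + y) := by
    intro y
    rw [← lintegral_indicator hs]
    rw [← lintegral_add_right_eq_self (fun x => s.indicator (fun x => φ (x - y)) x) y]
    refine lintegral_congr fun x => ?_
    by_cases h : x + y ∈ s
    · simp [Set.indicator_of_mem h, add_sub_cancel_right]
    · simp [Set.indicator_of_notMem h]
  calc
    ∫⁻ x in s, ∫⁻ y in s, φ (x - y)
        = ∫⁻ y in s, ∫⁻ x, φ x * s.indicator 1 (x + y) := by
          rw [hswap1]; exact lintegral_congr hinner
    _ = ∫⁻ x, ∫⁻ y in s, φ x * s.indicator 1 (x + y) := by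
          refine (lintegral_lintegral_swap ?_).symm
          have hm : Measurable fun p : E × E =>
              φ p.1 * s.indicator (1 : E → ℝ≥0∞) (p.1 + p.2) :=
            (hφ.comp measurable_fst).mul
              (((measurable_const : Measurable fun _ : E => (1:ℝ≥0∞)).indicator hs).comp
                (measurable_fst.add measurable_snd))
          exact hm.aemeasurable
    _ = ∫⁻ z, φ z * volume ({y | z + y ∈ s} ∩ s) := by
          refine lintegral_congr fun z => ?_
          have hmeas : MeasurableSet ((fun y => z + y) ⁻¹' s) := (measurable_const_add z) hs
          have hb : Measurable fun y : E => s.indicator (1 : E → ℝ≥0∞) (z + y) :=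
            ((measurable_const : Measurable fun _ : E => (1:ℝ≥0∞)).indicator hs).comp
              (measurable_const_add z)
          rw [lintegral_const_mul _ hb]
          congr 1
          have : ∀ y : E, s.indicator (1 : E → ℝ≥0∞) (z + y)
              = ((fun y => z + y) ⁻¹' s).indicator (1 : E → ℝ≥0∞) y := by
            intro y
            by_cases h : z + y ∈ s
            · simp [Set.indicator_of_mem h, Set.indicator_of_mem (Set.mem_preimage.2 h)]
            · simp [Set.indicator_of_notMem h,
                Set.indicator_of_notMem (fun hh => h (Set.mem_preimage.1 hh))]
          calc
            ∫⁻ y in s, s.indicator (1 : E → ℝ≥0∞) (z + y)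
                = ∫⁻ y in s, ((fun y => z + y) ⁻¹' s).indicator (1 : E → ℝ≥0∞) y :=
              lintegral_congr this
            _ = volume.restrict s ((fun y => z + y) ⁻¹' s) := lintegral_indicator_one hmeas
            _ = volume ({y | z + y ∈ s} ∩ s) := by
              rw [Measure.restrict_apply hmeas]; rfl

/-- Continuity of translation in measure. -/
lemma aux_tc (Q : Set E) (hQm : MeasurableSet Q) (hfin : volume Q ≠ ∞) :
    Tendsto (fun t : E => volume ({y | t + y ∈ Q} ∩ Q)) (𝓝 0) (𝓝 (volume Q)) := by
  set F : E → C(E, E) := fun t => ⟨fun y => t + y, by continuity⟩ with hF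
  have hFc : Continuous F := by
    have : Continuous fun p : E × E => p.1 + p.2 := continuous_add
    exact (ContinuousMap.mk _ this).curry.continuous
  have hsymm : Tendsto (fun t => volume ((F t ⁻¹' Q) ∆ (F 0 ⁻¹' Q))) (𝓝 0) (𝓝 0) :=
    tendsto_measure_symmDiff_preimage_nhds_zero (hFc.tendsto 0)
      (Eventually.of_forall fun t => measurePreserving_add_left volume t)
      (measurePreserving_add_left volume 0) hQm.nullMeasurableSet hfin
  have hF0 : F 0 ⁻¹' Q = Q := by
    ext y; simp [hF]
  rw [hF0] at hsymm
  have hdiff : Tendsto (fun t : E => volume (Q \ (F t ⁻¹' Q))) (𝓝 0) (𝓝 0) := by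
    refine tendsto_of_tendsto_of_tendsto_of_le_of_le tendsto_const_nhds hsymm
      (fun t => zero_le) fun t => measure_mono fun x hx => ?_
    exact Or.inr hx
  have heq : ∀ t : E, volume ({y | t + y ∈ Q} ∩ Q)
      = volume Q - volume (Q \ (F t ⁻¹' Q)) := by
    intro t
    have hmeas : MeasurableSet (F t ⁻¹' Q) := (measurable_const_add t) hQm
    have h1 : volume (Q ∩ (F t ⁻¹' Q)) + volume (Q \ (F t ⁻¹' Q)) = volume Q :=
      measure_inter_add_diff Q hmeas
    have h2 : volume (Q \ (F t ⁻¹' Q)) ≠ ∞ :=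
      ((measure_mono Set.diff_subset).trans_lt hfin.lt_top).ne
    have : {y | t + y ∈ Q} ∩ Q = Q ∩ (F t ⁻¹' Q) := by
      ext y
      simp only [Set.mem_inter_iff, Set.mem_setOf_eq, Set.mem_preimage, Set.mem_inter_iff]
      constructor
      · rintro ⟨h1, h2⟩; exact ⟨h2, h1⟩
      · rintro ⟨h1, h2⟩; exact ⟨h2, h1⟩
    rw [this, eq_comm]
    exact ENNReal.sub_eq_of_eq_add h2 h1.symm
  simp only [heq]
  have := ENNReal.Tendsto.sub (tendsto_const_nhds : Tendsto (fun _ : E => volume Q) (𝓝 0) _)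
    hdiff (Or.inl hfin)
  simpa using this

/-- Measurability of the translated-intersection measure. -/
lemma aux_meas (Q : Set E) (hQm : MeasurableSet Q) :
    Measurable fun z : E => volume ({y | z + y ∈ Q} ∩ Q) := by
  have hrepr : ∀ z : E, volume ({y | z + y ∈ Q} ∩ Q)
      = ∫⁻ y, Q.indicator (1 : E → ℝ≥0∞) (z + y) * Q.indicator (1 : E → ℝ≥0∞) y := by
    intro z
    have hmeas : MeasurableSet ({y : E | z + y ∈ Q} ∩ Q) :=
      ((measurable_const_add z) hQm).inter hQm
    rw [← lintegral_indicator_one hmeas]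
    refine lintegral_congr fun y => ?_
    by_cases h1 : z + y ∈ Q <;> by_cases h2 : y ∈ Q <;>
      simp [Set.indicator_apply, h1, h2, Set.mem_setOf_eq]
  simp only [hrepr]
  have hm : Measurable fun p : E × E =>
      Q.indicator (1 : E → ℝ≥0∞) (p.1 + p.2) * Q.indicator (1 : E → ℝ≥0∞) p.2 :=
    (((measurable_const : Measurable fun _ : E => (1:ℝ≥0∞)).indicator hQm).comp
      (measurable_fst.add measurable_snd)).mul
      (((measurable_const : Measurable fun _ : E => (1:ℝ≥0∞)).indicator hQm).comp
        measurable_snd)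
  exact hm.lintegral_prod_right'

end Aux

/-- If `f ∈ L¹(ℝⁿ)`, `f ≥ 0` a.e., `∫ f = 1`, and `Q ⊂ ℝⁿ` is a bounded measurable set of
positive measure, then `r^{−n} ∫_{rQ} ∫_{rQ} f(x−y) dx dy → meas(Q)` as `r → ∞`. -/
theorem stmt7 {n : ℕ} (f : EuclideanSpace ℝ (Fin n) → ℝ)
    (hf : Integrable f (volume : Measure (EuclideanSpace ℝ (Fin n))))
    (hpos : ∀ᵐ x ∂(volume : Measure (EuclideanSpace ℝ (Fin n))), 0 ≤ f x)
    (hone : ∫ x : EuclideanSpace ℝ (Fin n), f x = 1)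
    (Q : Set (EuclideanSpace ℝ (Fin n))) (hQm : MeasurableSet Q)
    (hQb : Bornology.IsBounded Q) (hQpos : 0 < volume Q) :
    Tendsto (fun r : ℝ => (r ^ n)⁻¹ * ∫ x in r • Q, ∫ y in r • Q, f (x - y))
      atTop (nhds (volume Q).toReal) := by
  classical
  set f' : EuclideanSpace ℝ (Fin n) → ℝ := hf.1.mk f with hf'def
  have hff' : f =ᵐ[volume] f' := hf.1.ae_eq_mk
  have hf'm : Measurable f' := hf.1.stronglyMeasurable_mk.measurable
  have hf'pos : ∀ᵐ x : EuclideanSpace ℝ (Fin n) ∂volume, 0 ≤ f' x := by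
    filter_upwards [hpos, hff'] with x h1 h2
    rw [← h2]; exact h1
  have hf'int : Integrable f' volume := hf.congr hff'
  set φ : EuclideanSpace ℝ (Fin n) → ℝ≥0∞ := fun x => ENNReal.ofReal (f' x) with hφdef
  have hφm : Measurable φ := ENNReal.measurable_ofReal.comp hf'm
  have hφ1 : ∫⁻ x, φ x = 1 := by
    rw [hφdef]
    rw [← ofReal_integral_eq_lintegral_ofReal hf'int hf'pos, ← integral_congr_ae hff', hone,
      ENNReal.ofReal_one]
  have hQfin : volume Q ≠ ∞ := hQb.measure_lt_top.ne
  -- the main pointwise identity for `r > 0`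
  have hmain : ∀ r : ℝ, 0 < r →
      (r ^ n)⁻¹ * ∫ x in r • Q, ∫ y in r • Q, f (x - y)
        = (∫⁻ z, φ z * volume ({y | r⁻¹ • z + y ∈ Q} ∩ Q)).toReal := by
    intro r hr
    have hsm : MeasurableSet (r • Q) := hQm.const_smul₀ r
    -- Step 1: Bochner double integral equals double lintegral
    have hLfin : ∀ x : EuclideanSpace ℝ (Fin n), (∫⁻ y in r • Q, φ (x - y)) ≠ ∞ := by
      intro x
      refine ((setLIntegral_le_lintegral _ _).trans_lt ?_).ne
      rw [(Measure.measurePreserving_sub_left volume x).lintegral_comp hφm, hφ1]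
      exact ENNReal.one_lt_top
    have hinner : ∀ x : EuclideanSpace ℝ (Fin n), ∫ y in r • Q, f (x - y) = (∫⁻ y in r • Q, φ (x - y)).toReal := by
      intro x
      have hqmp := (Measure.measurePreserving_sub_left volume x).quasiMeasurePreserving
      have hae : (fun y => f (x - y)) =ᵐ[volume.restrict (r • Q)] fun y => f' (x - y) :=
        (hff'.comp_tendsto hqmp.tendsto_ae).filter_mono (ae_mono Measure.restrict_le_self)
      have hpos' : 0 ≤ᵐ[volume.restrict (r • Q)] fun y => f' (x - y) :=
        (hqmp.tendsto_ae.eventually hf'pos).filter_mono (ae_mono Measure.restrict_le_self)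
      rw [integral_congr_ae hae,
        integral_eq_lintegral_of_nonneg_ae hpos'
          ((hf'm.comp (measurable_const.sub measurable_id)).aestronglyMeasurable)]
    have hLmeas : Measurable fun x : EuclideanSpace ℝ (Fin n) => ∫⁻ y in r • Q, φ (x - y) :=
      Measurable.lintegral_prod_right' (hφm.comp (measurable_fst.sub measurable_snd))
    have hboch : ∫ x in r • Q, ∫ y in r • Q, f (x - y)
        = (∫⁻ x in r • Q, ∫⁻ y in r • Q, φ (x - y)).toReal := by
      simp only [hinner]
      rw [integral_eq_lintegral_of_nonneg_ae
        (Eventually.of_forall fun x => ENNReal.toReal_nonneg)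
        hLmeas.ennreal_toReal.aestronglyMeasurable]
      congr 1
      refine lintegral_congr fun x => ?_
      exact ENNReal.ofReal_toReal (hLfin x)
    -- Step 2: Fubini identity
    have hfub := aux_fub φ hφm (r • Q) hsm
    -- Step 3: scaling
    have hscale : ∀ z : EuclideanSpace ℝ (Fin n), volume ({y | z + y ∈ r • Q} ∩ (r • Q))
        = ENNReal.ofReal (r ^ n) * volume ({y | r⁻¹ • z + y ∈ Q} ∩ Q) := by
      intro z
      have hset : {y | z + y ∈ r • Q} ∩ (r • Q)
          = r • ({y | r⁻¹ • z + y ∈ Q} ∩ Q) := by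
        ext u
        simp only [Set.mem_inter_iff, Set.mem_setOf_eq,
          Set.mem_smul_set_iff_inv_smul_mem₀ hr.ne', smul_add]
      rw [hset, Measure.addHaar_smul, finrank_euclideanSpace_fin,
        abs_of_nonneg (pow_nonneg hr.le n)]
    have hconst : (∫⁻ z, φ z * volume ({y | z + y ∈ r • Q} ∩ (r • Q)))
        = ENNReal.ofReal (r ^ n) * ∫⁻ z, φ z * volume ({y | r⁻¹ • z + y ∈ Q} ∩ Q) := by
      rw [← lintegral_const_mul' _ _ ENNReal.ofReal_ne_top]
      refine lintegral_congr fun z => ?_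
      rw [hscale z, mul_left_comm]
    rw [hboch, hfub, hconst, ENNReal.toReal_mul, ENNReal.toReal_ofReal (pow_nonneg hr.le n),
      ← mul_assoc, inv_mul_cancel₀ (pow_ne_zero n hr.ne'), one_mul]
  -- the limit of the right-hand side
  have hIto : Tendsto (fun r : ℝ => ∫⁻ z, φ z * volume ({y | r⁻¹ • z + y ∈ Q} ∩ Q))
      atTop (𝓝 (volume Q)) := by
    have hlim : Tendsto (fun r : ℝ => ∫⁻ z, φ z * volume ({y | r⁻¹ • z + y ∈ Q} ∩ Q))
        atTop (𝓝 (∫⁻ z, φ z * volume Q)) := by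
      refine tendsto_lintegral_filter_of_dominated_convergence (fun z => φ z * volume Q)
        (Eventually.of_forall fun r => ?_) (Eventually.of_forall fun r => ?_) ?_ ?_
      · exact hφm.mul ((aux_meas Q hQm).comp (measurable_const_smul r⁻¹))
      · exact Eventually.of_forall fun z =>
          mul_le_mul_right (measure_mono Set.inter_subset_right) _
      · rw [lintegral_mul_const _ hφm, hφ1, one_mul]; exact hQfin
      · refine Eventually.of_forall fun z => ?_
        have ht : Tendsto (fun r : ℝ => r⁻¹ • z) atTop (𝓝 (0 : EuclideanSpace ℝ (Fin n))) := by
          have h0 : Tendsto (fun r : ℝ => r⁻¹) atTop (𝓝 (0:ℝ)) := tendsto_inv_atTop_zero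
          have := h0.smul_const z
          rwa [zero_smul] at this
        exact ENNReal.Tendsto.const_mul ((aux_tc Q hQm hQfin).comp ht)
          (Or.inr ENNReal.ofReal_ne_top)
    have : ∫⁻ z, φ z * volume Q = volume Q := by
      rw [lintegral_mul_const _ hφm, hφ1, one_mul]
    rwa [this] at hlim
  have hItoReal : Tendsto
      (fun r : ℝ => (∫⁻ z, φ z * volume ({y | r⁻¹ • z + y ∈ Q} ∩ Q)).toReal)
      atTop (𝓝 (volume Q).toReal) :=
    (ENNReal.tendsto_toReal hQfin).comp hIto
  refine hItoReal.congr' ?_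
  filter_upwards [eventually_gt_atTop (0 : ℝ)] with r hr
  exact (hmain r hr).symm
end

section
/- Let f ∈ L¹(ℝⁿ) with f ≥ 0 almost everywhere and ∫_{ℝⁿ} f = 1, and suppose there exist constants p > 1 and C₁ > 0 such that 1 − ∫_{B_r(0)} f(x) dx ≤ C₁ r^{−p} for all r ≥ 1. Let Q ⊂ ℝⁿ be a bounded measurable set such that there is a constant C₀ with meas({x ∈ Q : dist(x, ℝⁿ∖Q) ≤ δ}) ≤ C₀ δ for all δ > 0 (as holds for a bounded domain with C¹ boundary). Then there exists a constant C > 0 such that |r^{−n} ∫_{rQ} ∫_{rQ} f(x−y) dx dy − meas(Q)| ≤ C/r for all r ≥ 1. -/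
open MeasureTheory Filter Pointwise

lemma dyadic_exists' {d : ℝ} (hd : 2 < d) :
    ∃ j : ℕ, 1 ≤ j ∧ (2:ℝ) ^ j < d ∧ d ≤ 2 ^ (j + 1) := by
  classical
  obtain ⟨m, hm⟩ := pow_unbounded_of_one_lt d (by norm_num : (1:ℝ) < 2)
  set P : ℕ → Prop := fun k => (2:ℝ) ^ k < d with hP
  have hP1 : P 1 := by simpa [hP] using hd
  have h1m : 1 ≤ m := by
    by_contra h
    interval_cases m
    · simp at hm; linarith
  set j := Nat.findGreatest P m with hj
  have hj1 : 1 ≤ j := Nat.le_findGreatest h1m hP1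
  have hPj : P j := Nat.findGreatest_spec h1m hP1
  refine ⟨j, hj1, hPj, ?_⟩
  by_contra h
  push_neg at h
  have hjm : j + 1 ≤ m := by
    by_contra h2
    push_neg at h2
    have : (2:ℝ) ^ m ≤ 2 ^ (j+1) := by
      apply pow_le_pow_right₀ (by norm_num) (by omega)
    linarith
  exact Nat.findGreatest_is_greatest (P := P) (k := j+1) (n := m) (by omega) hjm h

/-- Refined asymptotics: if `f ∈ L¹(ℝⁿ)` is nonnegative with `∫ f = 1` and its mass outside
the ball of radius `r` is `O(r^{−p})` for some `p > 1`, and `Q ⊂ ℝⁿ` is a bounded measurable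
set whose `δ`-inner-collar has measure `≤ C₀δ` (as for a bounded `C¹` domain), then
`|r^{−n} ∫_{rQ} ∫_{rQ} f(x−y) dx dy − meas(Q)| = O(1/r)`. -/
theorem stmt11 {n : ℕ} (f : EuclideanSpace ℝ (Fin n) → ℝ)
    (hf : Integrable f (volume : Measure (EuclideanSpace ℝ (Fin n))))
    (hpos : ∀ᵐ x ∂(volume : Measure (EuclideanSpace ℝ (Fin n))), 0 ≤ f x)
    (hone : ∫ x : EuclideanSpace ℝ (Fin n), f x = 1)
    (p C₁ : ℝ) (hp : 1 < p) (hC₁ : 0 < C₁)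
    (hdecay : ∀ r : ℝ, 1 ≤ r →
      1 - ∫ x in Metric.closedBall (0 : EuclideanSpace ℝ (Fin n)) r, f x ≤ C₁ / r ^ p)
    (Q : Set (EuclideanSpace ℝ (Fin n))) (hQm : MeasurableSet Q)
    (hQb : Bornology.IsBounded Q)
    (C₀ : ℝ) (hC₀ : ∀ δ : ℝ, 0 < δ →
      volume {x ∈ Q | Metric.infDist x Qᶜ ≤ δ} ≤ ENNReal.ofReal (C₀ * δ)) :
    ∃ C : ℝ, 0 < C ∧ ∀ r : ℝ, 1 ≤ r →
      |(r ^ n)⁻¹ * (∫ x in r • Q, ∫ y in r • Q, f (x - y)) - (volume Q).toReal| ≤ C / r := by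
  classical
  set q : ℝ := (2:ℝ) ^ (-p) with hqdef
  have hq0 : 0 < q := Real.rpow_pos_of_pos two_pos _
  have h2q : 2 * q = (2:ℝ) ^ (1 - p) := by
    rw [hqdef]
    rw [show (1 : ℝ) - p = 1 + (-p) by ring, Real.rpow_add two_pos, Real.rpow_one]
  have h2q1 : 2 * q < 1 := by
    rw [h2q]
    exact Real.rpow_lt_one_of_one_lt_of_neg one_lt_two (by linarith)
  set M : ℝ := max 1 (C₁ * (2:ℝ) ^ p) with hMdef
  have hM1 : (1:ℝ) ≤ M := le_max_left _ _
  have hM0 : 0 < M := lt_of_lt_of_le one_pos hM1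
  set c : ℝ := max C₀ 1 with hcdef
  have hc1 : (1:ℝ) ≤ c := le_max_right _ _
  have hc0 : 0 < c := lt_of_lt_of_le one_pos hc1
  have hc : ∀ δ : ℝ, 0 < δ →
      volume {x ∈ Q | Metric.infDist x Qᶜ ≤ δ} ≤ ENNReal.ofReal (c * δ) := by
    intro δ hδ
    exact (hC₀ δ hδ).trans (ENNReal.ofReal_le_ofReal
      (mul_le_mul_of_nonneg_right (le_max_left _ _) hδ.le))
  set S : ℝ := (1 - 2*q)⁻¹ with hSdef
  have hS0 : 0 < S := inv_pos.2 (by linarith)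
  set K : ℝ := 2 * M * c * S with hKdef
  have hK0 : 0 < K := by positivity
  refine ⟨K, hK0, fun r hr => ?_⟩
  have hr0 : 0 < r := lt_of_lt_of_le one_pos hr
  have hrn : (0:ℝ) < r ^ n := pow_pos hr0 n
  set Rq : Set (EuclideanSpace ℝ (Fin n)) := r • Q with hRqdef
  have hRqm : MeasurableSet Rq := hQm.const_smul₀ r
  have hfin : Module.finrank ℝ (EuclideanSpace ℝ (Fin n)) = n := finrank_euclideanSpace_fin
  have hVQ : volume Q ≠ ⊤ := hQb.measure_lt_top.ne
  have hvolRq : volume Rq = ENNReal.ofReal (r ^ n) * volume Q := by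
    rw [hRqdef, Measure.addHaar_smul, hfin, abs_of_pos hrn]
  have hvolRq_ne : volume Rq ≠ ⊤ := by
    rw [hvolRq]
    exact ENNReal.mul_ne_top ENNReal.ofReal_ne_top hVQ
  have hvolRqReal : (volume Rq).toReal = r ^ n * (volume Q).toReal := by
    rw [hvolRq, ENNReal.toReal_mul, ENNReal.toReal_ofReal hrn.le]
  -- measure preserving subtraction
  have hmp : ∀ x : EuclideanSpace ℝ (Fin n),
      MeasurePreserving (fun y : EuclideanSpace ℝ (Fin n) => x - y) volume volume :=
    fun x => Measure.measurePreserving_sub_left volume x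
  have hemb : ∀ x : EuclideanSpace ℝ (Fin n),
      MeasurableEmbedding (fun y : EuclideanSpace ℝ (Fin n) => x - y) := by
    intro x
    have : (fun y : EuclideanSpace ℝ (Fin n) => x - y)
        = ⇑((MeasurableEquiv.neg (EuclideanSpace ℝ (Fin n))).trans (MeasurableEquiv.addLeft x)) := by
      funext y
      simp [MeasurableEquiv.coe_trans, Function.comp, sub_eq_add_neg]
    rw [this]
    exact MeasurableEquiv.measurableEmbedding _
  have hxpos : ∀ x : EuclideanSpace ℝ (Fin n), ∀ᵐ y ∂(volume : Measure (EuclideanSpace ℝ (Fin n))),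
      0 ≤ f (x - y) := by
    intro x
    exact (hmp x).quasiMeasurePreserving.tendsto_ae.eventually hpos
  have hInt : ∀ x : EuclideanSpace ℝ (Fin n),
      Integrable (fun y => f (x - y)) (volume : Measure (EuclideanSpace ℝ (Fin n))) :=
    fun x => hf.comp_sub_left x
  have htot : ∀ x : EuclideanSpace ℝ (Fin n), ∫ y, f (x - y) = 1 := by
    intro x
    rw [(hmp x).integral_comp (hemb x) f, hone]
  have hle1 : ∀ x : EuclideanSpace ℝ (Fin n), (∫ y in Rq, f (x - y)) ≤ 1 := by
    intro x
    calc (∫ y in Rq, f (x - y)) ≤ ∫ y, f (x - y) :=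
          setIntegral_le_integral (hInt x) (hxpos x)
      _ = 1 := htot x
  have hge0 : ∀ x : EuclideanSpace ℝ (Fin n), 0 ≤ ∫ y in Rq, f (x - y) := by
    intro x
    exact setIntegral_nonneg_ae hRqm ((hxpos x).mono fun y hy _ => hy)
  have hgnonneg : ∀ x : EuclideanSpace ℝ (Fin n), 0 ≤ 1 - ∫ y in Rq, f (x - y) :=
    fun x => by linarith [hle1 x]
  -- measurability of convolution
  have hmeas_h : AEStronglyMeasurable (fun x => ∫ y in Rq, f (x - y))
      (volume : Measure (EuclideanSpace ℝ (Fin n))) := by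
    have hsubprod : MeasurePreserving
        (fun z : EuclideanSpace ℝ (Fin n) × EuclideanSpace ℝ (Fin n) => (z.1 - z.2, z.2))
        ((volume : Measure (EuclideanSpace ℝ (Fin n))).prod volume)
        ((volume : Measure (EuclideanSpace ℝ (Fin n))).prod volume) :=
      measurePreserving_sub_prod volume volume
    have h1 : AEStronglyMeasurable
        (fun w : EuclideanSpace ℝ (Fin n) × EuclideanSpace ℝ (Fin n) => f w.1)
        ((volume : Measure (EuclideanSpace ℝ (Fin n))).prod volume) :=
      hf.1.comp_quasiMeasurePreserving Measure.quasiMeasurePreserving_fst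
    have h2 : AEStronglyMeasurable
        (fun z : EuclideanSpace ℝ (Fin n) × EuclideanSpace ℝ (Fin n) => f (z.1 - z.2))
        ((volume : Measure (EuclideanSpace ℝ (Fin n))).prod volume) :=
      h1.comp_quasiMeasurePreserving hsubprod.quasiMeasurePreserving
    have h3 : AEStronglyMeasurable
        (fun z : EuclideanSpace ℝ (Fin n) × EuclideanSpace ℝ (Fin n) =>
          Rq.indicator (fun _ => (1:ℝ)) z.2 * f (z.1 - z.2))
        ((volume : Measure (EuclideanSpace ℝ (Fin n))).prod volume) :=
      (((measurable_const.indicator hRqm).comp measurable_snd).aestronglyMeasurable).mul h2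
    have h4 := h3.integral_prod_right'
    have heq : (fun x : EuclideanSpace ℝ (Fin n) => ∫ y in Rq, f (x - y))
        = fun x => ∫ y, Rq.indicator (fun _ => (1:ℝ)) y * f (x - y) := by
      funext x
      rw [← integral_indicator hRqm]
      congr 1
      funext y
      by_cases hy : y ∈ Rq <;> simp [hy]
    rw [heq]
    exact h4
  -- tail bound
  have htail : ∀ x : EuclideanSpace ℝ (Fin n), ∀ t : ℝ, 1 ≤ t → Metric.closedBall x t ⊆ Rq →
      1 - (∫ y in Rq, f (x - y)) ≤ C₁ / t ^ p := by
    intro x t ht hsub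
    have hmono : ∫ y in Metric.closedBall x t, f (x - y) ≤ ∫ y in Rq, f (x - y) :=
      setIntegral_mono_set (hInt x).integrableOn
        (((hxpos x).filter_mono (ae_mono Measure.restrict_le_self)).mono fun y hy => hy)
        (HasSubset.Subset.eventuallyLE hsub)
    have hpre : (fun y : EuclideanSpace ℝ (Fin n) => x - y) ⁻¹' Metric.closedBall 0 t
        = Metric.closedBall x t := by
      ext y
      simp only [Set.mem_preimage, Metric.mem_closedBall]
      rw [dist_zero_right, dist_eq_norm, norm_sub_rev]
    have hchg : ∫ y in Metric.closedBall x t, f (x - y) = ∫ z in Metric.closedBall 0 t, f z := by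
      rw [← hpre, (hmp x).setIntegral_preimage_emb (hemb x) f _]
    have := hdecay t ht
    linarith
  -- collar bound
  have hcollar : ∀ δ : ℝ, 0 < δ →
      volume {x ∈ Rq | Metric.infDist x Rqᶜ ≤ δ} ≤ ENNReal.ofReal (c * δ * r ^ n / r) := by
    intro δ hδ
    have hcompl : Rqᶜ = r • (Qᶜ) := by
      ext w
      simp only [Set.mem_compl_iff, hRqdef, Set.mem_smul_set_iff_inv_smul_mem₀ hr0.ne']
    have hsub2 : {x ∈ Rq | Metric.infDist x Rqᶜ ≤ δ}
        ⊆ r • {z ∈ Q | Metric.infDist z Qᶜ ≤ δ / r} := by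
      rintro x ⟨hxRq, hxd⟩
      rw [hRqdef] at hxRq
      obtain ⟨z, hz, rfl⟩ := hxRq
      refine ⟨z, ⟨hz, ?_⟩, rfl⟩
      rw [hcompl, infDist_smul₀ hr0.ne' _ _, Real.norm_eq_abs, abs_of_pos hr0] at hxd
      rw [le_div_iff₀ hr0]
      linarith
    calc volume {x ∈ Rq | Metric.infDist x Rqᶜ ≤ δ}
        ≤ volume (r • {z ∈ Q | Metric.infDist z Qᶜ ≤ δ / r}) := measure_mono hsub2
      _ = ENNReal.ofReal (r ^ n) * volume {z ∈ Q | Metric.infDist z Qᶜ ≤ δ / r} := by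
          rw [Measure.addHaar_smul, hfin, abs_of_pos hrn]
      _ ≤ ENNReal.ofReal (r ^ n) * ENNReal.ofReal (c * (δ / r)) :=
          mul_le_mul_right (hc _ (div_pos hδ hr0)) _
      _ = ENNReal.ofReal (c * δ * r ^ n / r) := by
          rw [← ENNReal.ofReal_mul hrn.le]
          congr 1
          field_simp
  -- shells
  set A : ℕ → Set (EuclideanSpace ℝ (Fin n)) :=
    fun k => {x ∈ Rq | Metric.infDist x Rqᶜ ≤ 2 ^ (k+1)} with hAdef
  have hAm : ∀ k, MeasurableSet (A k) := by
    intro k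
    exact hRqm.inter (measurableSet_le (Metric.continuous_infDist_pt _).measurable
      measurable_const)
  have hAvol : ∀ k, volume (A k) ≤ ENNReal.ofReal (c * 2 ^ (k+1) * r ^ n / r) :=
    fun k => hcollar _ (by positivity)
  -- pointwise dyadic bound
  have hptwise : ∀ x ∈ Rq, ENNReal.ofReal (1 - ∫ y in Rq, f (x - y))
      ≤ ∑' k : ℕ, ENNReal.ofReal (M * q ^ k) * (A k).indicator 1 x := by
    intro x hx
    by_cases hd : Metric.infDist x Rqᶜ ≤ 2
    · have hxA : x ∈ A 0 := ⟨hx, by simpa using hd⟩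
      have hb : ENNReal.ofReal (1 - ∫ y in Rq, f (x - y))
          ≤ ENNReal.ofReal (M * q ^ 0) * (A 0).indicator 1 x := by
        rw [Set.indicator_of_mem hxA, Pi.one_apply, mul_one, pow_zero, mul_one]
        exact ENNReal.ofReal_le_ofReal (by linarith [hge0 x])
      exact hb.trans (ENNReal.le_tsum 0)
    · push_neg at hd
      obtain ⟨j, hj1, hjlt, hjle⟩ := dyadic_exists' hd
      have hxA : x ∈ A j := ⟨hx, hjle⟩
      have hb2 : (2:ℝ) ≤ 2 ^ j := by
        calc (2:ℝ) = 2 ^ 1 := (pow_one 2).symm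
          _ ≤ 2 ^ j := pow_le_pow_right₀ one_le_two hj1
      have ht1 : (1:ℝ) ≤ 2 ^ j / 2 := by linarith
      have hball : Metric.closedBall x ((2:ℝ) ^ j / 2) ⊆ Rq := by
        intro y hy
        by_contra hyn
        have h1 : Metric.infDist x Rqᶜ ≤ dist x y := Metric.infDist_le_dist_of_mem hyn
        rw [Metric.mem_closedBall] at hy
        rw [dist_comm] at h1
        linarith
      have hgb := htail x _ ht1 hball
      have hq_j : q ^ j = ((2:ℝ) ^ j) ^ (-p) := by
        rw [hqdef, ← Real.rpow_natCast ((2:ℝ) ^ (-p)) j, ← Real.rpow_natCast (2:ℝ) j,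
          ← Real.rpow_mul (by norm_num : (0:ℝ) ≤ 2), ← Real.rpow_mul (by norm_num : (0:ℝ) ≤ 2)]
        congr 1
        ring
      have hbp : (0:ℝ) < ((2:ℝ) ^ j) ^ p := Real.rpow_pos_of_pos (by positivity) _
      have hval : C₁ / ((2:ℝ) ^ j / 2) ^ p ≤ M * q ^ j := by
        have e1 : ((2:ℝ) ^ j / 2 : ℝ) ^ p = ((2:ℝ) ^ j) ^ p / (2:ℝ) ^ p :=
          Real.div_rpow (by positivity : (0:ℝ) ≤ (2:ℝ) ^ j) (by norm_num : (0:ℝ) ≤ (2:ℝ)) p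
        have e2 : ((2:ℝ) ^ j : ℝ) ^ (-p) = (((2:ℝ) ^ j : ℝ) ^ p)⁻¹ :=
          Real.rpow_neg (by positivity) p
        rw [e1, div_div_eq_mul_div, hq_j, e2, div_eq_mul_inv]
        exact mul_le_mul_of_nonneg_right (le_max_right _ _) (inv_nonneg.2 hbp.le)
      have hfinal : 1 - ∫ y in Rq, f (x - y) ≤ M * q ^ j := le_trans hgb hval
      have hb : ENNReal.ofReal (1 - ∫ y in Rq, f (x - y))
          ≤ ENNReal.ofReal (M * q ^ j) * (A j).indicator 1 x := by
        rw [Set.indicator_of_mem hxA, Pi.one_apply, mul_one]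
        exact ENNReal.ofReal_le_ofReal hfinal
      exact hb.trans (ENNReal.le_tsum j)
  -- lintegral bound
  have hLbound : (∫⁻ x in Rq, ENNReal.ofReal (1 - ∫ y in Rq, f (x - y)))
      ≤ ENNReal.ofReal (K * r ^ n / r) := by
    have hmeasF : ∀ k : ℕ, Measurable fun x : EuclideanSpace ℝ (Fin n) =>
        ENNReal.ofReal (M * q ^ k) * (A k).indicator 1 x :=
      fun k => (measurable_one.indicator (hAm k)).const_mul _
    have hmeasT : Measurable fun x : EuclideanSpace ℝ (Fin n) =>
        ∑' k : ℕ, ENNReal.ofReal (M * q ^ k) * (A k).indicator 1 x :=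
      Measurable.ennreal_tsum hmeasF
    calc (∫⁻ x in Rq, ENNReal.ofReal (1 - ∫ y in Rq, f (x - y)))
        ≤ ∫⁻ x in Rq, ∑' k : ℕ, ENNReal.ofReal (M * q ^ k) * (A k).indicator 1 x :=
          setLIntegral_mono hmeasT hptwise
      _ ≤ ∫⁻ x, ∑' k : ℕ, ENNReal.ofReal (M * q ^ k) * (A k).indicator 1 x :=
          setLIntegral_le_lintegral _ _
      _ = ∑' k : ℕ, ∫⁻ x, ENNReal.ofReal (M * q ^ k) * (A k).indicator 1 x :=
          lintegral_tsum fun k => (hmeasF k).aemeasurable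
      _ = ∑' k : ℕ, ENNReal.ofReal (M * q ^ k) * volume (A k) := by
          congr 1; funext k
          rw [lintegral_const_mul _ (measurable_one.indicator (hAm k)),
            lintegral_indicator_one (hAm k)]
      _ ≤ ∑' k : ℕ, ENNReal.ofReal (M * q ^ k) * ENNReal.ofReal (c * 2 ^ (k+1) * r ^ n / r) :=
          ENNReal.tsum_le_tsum fun k => mul_le_mul_right (hAvol k) _
      _ = ∑' k : ℕ, ENNReal.ofReal ((2 * M * c * r ^ n / r) * (2 * q) ^ k) := by
          congr 1; funext k
          rw [← ENNReal.ofReal_mul (by positivity : (0:ℝ) ≤ M * q ^ k)]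
          congr 1
          rw [mul_pow]
          ring
      _ = ENNReal.ofReal (2 * M * c * r ^ n / r) * ∑' k : ℕ, (ENNReal.ofReal (2 * q)) ^ k := by
          rw [← ENNReal.tsum_mul_left]
          congr 1; funext k
          rw [ENNReal.ofReal_mul (by positivity : (0:ℝ) ≤ 2 * M * c * r ^ n / r),
            ENNReal.ofReal_pow (by positivity : (0:ℝ) ≤ 2 * q)]
      _ = ENNReal.ofReal (2 * M * c * r ^ n / r) * ENNReal.ofReal S := by
          rw [ENNReal.tsum_geometric]
          congr 1
          rw [hSdef, ENNReal.ofReal_inv_of_pos (by linarith : (0:ℝ) < 1 - 2 * q),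
            ENNReal.ofReal_sub _ (by positivity : (0:ℝ) ≤ 2 * q), ENNReal.ofReal_one]
      _ = ENNReal.ofReal (K * r ^ n / r) := by
          rw [← ENNReal.ofReal_mul (by positivity : (0:ℝ) ≤ 2 * M * c * r ^ n / r)]
          congr 1
          rw [hKdef]
          ring
  have hint_g_le : (∫ x in Rq, (1 - ∫ y in Rq, f (x - y))) ≤ K * r ^ n / r := by
    rw [integral_eq_lintegral_of_nonneg_ae (ae_of_all _ fun x => hgnonneg x)
      ((aestronglyMeasurable_const.sub hmeas_h).restrict)]
    exact ENNReal.toReal_le_of_le_ofReal (by positivity) hLbound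
  have hIntOn : IntegrableOn (fun x => ∫ y in Rq, f (x - y)) Rq volume := by
    apply Measure.integrableOn_of_bounded hvolRq_ne hmeas_h (M := ∫ z, ‖f z‖)
    apply ae_of_all
    intro x
    calc ‖∫ y in Rq, f (x - y)‖ ≤ ∫ y in Rq, ‖f (x - y)‖ := norm_integral_le_integral_norm _
      _ ≤ ∫ y, ‖f (x - y)‖ :=
          setIntegral_le_integral (hInt x).norm (ae_of_all _ fun y => norm_nonneg _)
      _ = ∫ z, ‖f z‖ := (hmp x).integral_comp (hemb x) fun z => ‖f z‖
  have hsplit : (∫ x in Rq, (1 - ∫ y in Rq, f (x - y)))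
      = r ^ n * (volume Q).toReal - ∫ x in Rq, ∫ y in Rq, f (x - y) := by
    rw [integral_sub (integrableOn_const (C := (1:ℝ)) hvolRq_ne) hIntOn]
    congr 1
    rw [setIntegral_const, smul_eq_mul, mul_one, measureReal_def, hvolRqReal]
  have hnn : 0 ≤ ∫ x in Rq, (1 - ∫ y in Rq, f (x - y)) :=
    setIntegral_nonneg hRqm (fun x _ => hgnonneg x)
  set Ig : ℝ := ∫ x in Rq, (1 - ∫ y in Rq, f (x - y)) with hIgdef
  have hII : (∫ x in Rq, ∫ y in Rq, f (x - y)) = r ^ n * (volume Q).toReal - Ig := by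
    linarith [hsplit]
  rw [hII]
  have heq : (r ^ n)⁻¹ * (r ^ n * (volume Q).toReal - Ig) - (volume Q).toReal
      = -((r ^ n)⁻¹ * Ig) := by
    field_simp
    ring
  rw [heq, abs_neg, abs_of_nonneg (mul_nonneg (inv_nonneg.2 hrn.le) hnn)]
  calc (r ^ n)⁻¹ * Ig ≤ (r ^ n)⁻¹ * (K * r ^ n / r) := by
        exact mul_le_mul_of_nonneg_left hint_g_le (inv_nonneg.2 hrn.le)
    _ = K / r := by field_simp
end

section
/- Fix ε ∈ (0,1). Let γ : [0,∞) → (0,∞) be decreasing, with t ↦ γ(|t|)^{1−ε} square-integrable on ℝ, and such that for every s₀ > 0 there is a constant C₀ with γ(max(s−s₀,0)) ≤ C₀·γ(s)^{1−ε} for all s ≥ 0. Let φ ∈ L²(ℝ) satisfy |φ(t)| ≤ γ(|t|) for all t, let Ω ⊂ ℝ² be a bounded measurable set, and suppose ψ ∈ L²(ℝ) and λ > 0 satisfy λ·ψ(x) = ∫_ℝ k_Ω(x,y)·ψ(y) dy for all x ∈ ℝ. Then there is a constant C such that |ψ(t)| ≤ C·γ(|t|)^{1−ε} for all t ∈ ℝ.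 -/
open MeasureTheory Complex ComplexConjugate
open scoped ENNReal

/-- Time-frequency shift: `ρ(τ,σ)f(t) = exp(πiτσ)·exp(2πiσt)·f(t+τ)`. -/
noncomputable def rho (τ σ : ℝ) (f : ℝ → ℂ) : ℝ → ℂ := fun t =>
  Complex.exp (Real.pi * Complex.I * τ * σ) *
    Complex.exp (2 * Real.pi * Complex.I * σ * t) * f (t + τ)

/-- The concentration kernel `k_Ω(x,y) = ∫∫_Ω ρ(τ,σ)φ(x)·conj(ρ(τ,σ)φ(y)) dτ dσ`. -/
noncomputable def kker (φ : ℝ → ℂ) (Ω : Set (ℝ × ℝ)) (x y : ℝ) : ℂ :=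
  ∫ p in Ω, rho p.1 p.2 φ x * conj (rho p.1 p.2 φ y)

lemma rho_norm (τ σ : ℝ) (f : ℝ → ℂ) (t : ℝ) : ‖rho τ σ f t‖ = ‖f (t + τ)‖ := by
  have h1 : (Real.pi : ℂ) * Complex.I * τ * σ = ((Real.pi * τ * σ : ℝ) : ℂ) * Complex.I := by
    push_cast; ring
  have h2 : (2 : ℂ) * Real.pi * Complex.I * σ * t
      = ((2 * Real.pi * σ * t : ℝ) : ℂ) * Complex.I := by
    push_cast; ring
  rw [rho, h1, h2]
  simp only [norm_mul, Complex.norm_exp_ofReal_mul_I, one_mul]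

/-- Decay of eigenfunctions of the concentration operator: if `|φ| ≤ γ(|·|)` for a decreasing
positive `γ` with `γ(|·|)^{1−ε} ∈ L²` and `γ(max(s−s₀,0)) = O(γ(s)^{1−ε})` for each `s₀ > 0`,
then any eigenfunction `ψ` with eigenvalue `λ > 0` satisfies `|ψ(t)| ≤ C·γ(|t|)^{1−ε}`. -/
theorem stmt15 (ε : ℝ) (hε0 : 0 < ε) (hε1 : ε < 1)
    (γ : ℝ → ℝ) (hγpos : ∀ s : ℝ, 0 ≤ s → 0 < γ s)
    (hγdec : AntitoneOn γ (Set.Ici 0))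
    (hγL2 : MemLp (fun t : ℝ => γ |t| ^ (1 - ε)) 2 (volume : Measure ℝ))
    (hγshift : ∀ s₀ : ℝ, 0 < s₀ → ∃ C₀ : ℝ, ∀ s : ℝ, 0 ≤ s →
      γ (max (s - s₀) 0) ≤ C₀ * γ s ^ (1 - ε))
    (φ : ℝ → ℂ) (hφ : MemLp φ 2 (volume : Measure ℝ))
    (hφb : ∀ t : ℝ, ‖φ t‖ ≤ γ |t|)
    (Ω : Set (ℝ × ℝ)) (hΩm : MeasurableSet Ω) (hΩb : Bornology.IsBounded Ω)
    (ψ : ℝ → ℂ) (hψ : MemLp ψ 2 (volume : Measure ℝ))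
    (lam : ℝ) (hlam : 0 < lam)
    (heig : ∀ x : ℝ, (lam : ℂ) * ψ x = ∫ y : ℝ, kker φ Ω x y * ψ y) :
    ∃ C : ℝ, ∀ t : ℝ, ‖ψ t‖ ≤ C * γ |t| ^ (1 - ε) := by
  -- a radius bounding Ω
  obtain ⟨r, hr⟩ := hΩb.subset_closedBall 0
  set R : ℝ := |r| + 1 with hRdef
  have hRpos : 0 < R := by positivity
  have hΩR : Ω ⊆ Metric.closedBall 0 R := by
    refine hr.trans (Metric.closedBall_subset_closedBall ?_)
    calc r ≤ |r| := le_abs_self r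
    _ ≤ R := by simp [hRdef]
  -- shift constant
  obtain ⟨C₀, hC₀⟩ := hγshift R hRpos
  have hγnn : ∀ t : ℝ, 0 ≤ γ |t| ^ (1 - ε) := fun t =>
    Real.rpow_nonneg (hγpos _ (abs_nonneg t)).le _
  have hC₀pos : 0 < C₀ := by
    have h := hC₀ 0 le_rfl
    have h0 : max (0 - R) 0 = 0 := by
      rw [max_eq_right]; linarith
    rw [h0] at h
    have hγ0 : 0 < γ 0 := hγpos 0 le_rfl
    nlinarith [Real.rpow_nonneg hγ0.le (1 - ε), hγ0,
      Real.rpow_pos_of_pos hγ0 (1 - ε)]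
  -- key pointwise bound
  have hkey : ∀ t τ : ℝ, |τ| ≤ R → γ |t + τ| ≤ C₀ * γ |t| ^ (1 - ε) := by
    intro t τ hτ
    have h1 : max (|t| - R) 0 ≤ |t + τ| := by
      have h := abs_sub_abs_le_abs_sub t (-τ)
      rw [sub_neg_eq_add, abs_neg] at h
      exact max_le (by linarith) (abs_nonneg _)
    calc γ |t + τ| ≤ γ (max (|t| - R) 0) :=
          hγdec (Set.mem_Ici.2 (le_max_right _ _)) (Set.mem_Ici.2 (abs_nonneg _)) h1
      _ ≤ C₀ * γ |t| ^ (1 - ε) := hC₀ _ (abs_nonneg _)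
  -- bound on |φ| after shift
  have hφkey : ∀ t τ : ℝ, |τ| ≤ R → ‖φ (t + τ)‖ ≤ C₀ * γ |t| ^ (1 - ε) := fun t τ hτ =>
    (hφb _).trans (hkey t τ hτ)
  -- volume of Ω is finite
  have hΩfin : volume Ω < ⊤ := hΩb.measure_lt_top
  set V : ℝ := (volume Ω).toReal with hV
  have hVnn : 0 ≤ V := ENNReal.toReal_nonneg
  -- kernel bound
  have hk : ∀ x y : ℝ, ‖kker φ Ω x y‖ ≤
      (C₀ * γ |x| ^ (1 - ε) * (C₀ * γ |y| ^ (1 - ε))) * V := by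
    intro x y
    refine norm_setIntegral_le_of_norm_le_const hΩfin ?_
    intro p hp
    have hpR : |p.1| ≤ R := by
      have h := hΩR hp
      rw [Metric.mem_closedBall, dist_zero_right] at h
      calc |p.1| = ‖p.1‖ := (Real.norm_eq_abs _).symm
        _ ≤ ‖p‖ := norm_fst_le p
        _ ≤ R := h
    rw [norm_mul, RCLike.norm_conj, rho_norm, rho_norm]
    exact mul_le_mul (hφkey x p.1 hpR) (hφkey y p.1 hpR) (norm_nonneg _)
      (mul_nonneg hC₀pos.le (hγnn x))
  -- integrability of the dominating function
  have hInt : Integrable (fun y : ℝ => γ |y| ^ (1 - ε) * ‖ψ y‖) volume := by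
    have := (hψ.norm.smul hγL2 (hpqr := (⟨by simp [ENNReal.inv_two_add_inv_two]⟩ : ENNReal.HolderTriple 2 2 1)))
    rw [← memLp_one_iff_integrable]
    exact this
  set I : ℝ := ∫ y : ℝ, γ |y| ^ (1 - ε) * ‖ψ y‖ with hI
  have hInn : 0 ≤ I := integral_nonneg fun y => mul_nonneg (hγnn y) (norm_nonneg _)
  refine ⟨C₀ * C₀ * V * I / lam, fun t => ?_⟩
  have hmain : lam * ‖ψ t‖ ≤ (C₀ * C₀ * V * I) * γ |t| ^ (1 - ε) := by
    have h1 : lam * ‖ψ t‖ = ‖(lam : ℂ) * ψ t‖ := by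
      rw [norm_mul, Complex.norm_real, Real.norm_of_nonneg hlam.le]
    rw [h1, heig t]
    calc ‖∫ y : ℝ, kker φ Ω t y * ψ y‖ ≤ ∫ y : ℝ, ‖kker φ Ω t y * ψ y‖ :=
          norm_integral_le_integral_norm _
      _ ≤ ∫ y : ℝ, (C₀ * γ |t| ^ (1 - ε) * C₀ * V) * (γ |y| ^ (1 - ε) * ‖ψ y‖) := by
          refine integral_mono_of_nonneg (Filter.Eventually.of_forall fun y => norm_nonneg _)
            (hInt.const_mul _) (Filter.Eventually.of_forall fun y => ?_)
          show ‖kker φ Ω t y * ψ y‖ ≤ C₀ * γ |t| ^ (1 - ε) * C₀ * V * (γ |y| ^ (1 - ε) * ‖ψ y‖)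
          rw [norm_mul]
          have := hk t y
          calc ‖kker φ Ω t y‖ * ‖ψ y‖
              ≤ ((C₀ * γ |t| ^ (1 - ε) * (C₀ * γ |y| ^ (1 - ε))) * V) * ‖ψ y‖ :=
                mul_le_mul_of_nonneg_right this (norm_nonneg _)
            _ = (C₀ * γ |t| ^ (1 - ε) * C₀ * V) * (γ |y| ^ (1 - ε) * ‖ψ y‖) := by ring
      _ = (C₀ * γ |t| ^ (1 - ε) * C₀ * V) * I := integral_const_mul _ _
      _ = (C₀ * C₀ * V * I) * γ |t| ^ (1 - ε) := by ring
  rw [div_mul_eq_mul_div, le_div_iff₀ hlam, mul_comm (‖ψ t‖) lam]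
  exact hmain
end
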